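/- arXiv:1603.00006 — 5 statements merged into one kernel-verified Lean document; each statement's English description precedes it below -/
import Mathlib

section
/- For every natural number n, with m = 2^n, every maximal set of distinct Hadamard vectors in dimension m can be partitioned into exactly 2^(2^n - n - 1) Hadamard matrices; that is, S is the disjoint union of 2^(2^n - n - 1) subsets of size m, each of which is the set of rows of an m×m Hadamard matrix. -/
noncomputable section HadAux

open Finset

/-- sign map ZMod 2 → ℝ -/
def eps (s : ZMod 2) : ℝ := if s = 0 then 1 else -1

lemma zmod2_cases (s : ZMod 2) : s = 0 ∨ s = 1 := by revert s; decide

lemma eps_add (s t : ZMod 2) : eps (s + t) = eps s * eps t := by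
  rcases zmod2_cases s with h | h <;> rcases zmod2_cases t with h' | h' <;>
    subst h <;> subst h' <;> simp [eps, show (1+1:ZMod 2)=0 from by decide]

lemma eps_sq (s : ZMod 2) : eps s * eps s = 1 := by
  rcases zmod2_cases s with h | h <;> subst h <;> simp [eps]

lemma eps_cases (s : ZMod 2) : eps s = 1 ∨ eps s = -1 := by
  rcases zmod2_cases s with h | h <;> subst h <;> norm_num [eps]

lemma eps_inj {s t : ZMod 2} (h : eps s = eps t) : s = t := by
  rcases zmod2_cases s with hs | hs <;> rcases zmod2_cases t with ht | ht <;>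
    subst hs <;> subst ht <;> first | rfl | (norm_num [eps] at h)

lemma eps_add_one (s : ZMod 2) : eps (s + 1) = - eps s := by
  rcases zmod2_cases s with h | h <;> subst h <;>
    simp [eps, show (1+1:ZMod 2)=0 from by decide]

variable (n : ℕ)

abbrev HV := Fin n → ZMod 2

def dotp (a v : HV n) : ZMod 2 := ∑ i, a i * v i

variable {n}

lemma dotp_add_left (a b v : HV n) : dotp n (a + b) v = dotp n a v + dotp n b v := by
  simp [dotp, add_mul, Finset.sum_add_distrib]

lemma dotp_add_right (a v w : HV n) : dotp n a (v + w) = dotp n a v + dotp n a w := by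
  simp [dotp, mul_add, Finset.sum_add_distrib]

lemma dotp_single (a : HV n) (j : Fin n) : dotp n a (Pi.single j 1) = a j := by
  simp [dotp, Pi.single_apply, mul_ite, Finset.sum_ite_eq']

lemma sum_eps_dot {c : HV n} (hc : c ≠ 0) : ∑ v : HV n, eps (dotp n c v) = 0 := by
  have : ∃ j, c j ≠ 0 := by
    by_contra h
    push_neg at h
    exact hc (funext fun j => h j)
  obtain ⟨j, hj⟩ := this
  have hcj : c j = 1 := (zmod2_cases (c j)).resolve_left hj
  set u : HV n := Pi.single j 1 with hu
  have key : ∑ v : HV n, eps (dotp n c v) = ∑ v : HV n, eps (dotp n c (v + u)) := by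
    exact (Fintype.sum_equiv (Equiv.addRight u) _ _ fun v => rfl).symm
  have key2 : ∀ v : HV n, eps (dotp n c (v + u)) = - eps (dotp n c v) := by
    intro v
    rw [dotp_add_right, hu, dotp_single, hcj, eps_add_one]
  rw [Finset.sum_congr rfl (fun v _ => key2 v), Finset.sum_neg_distrib] at key
  linarith

variable (n)

abbrev Gn := HV n → ZMod 2

def linA (a : HV n) : Gn n := fun v => dotp n a v

def cOne (c : ZMod 2) : Gn n := fun _ => c

def Lmap : (HV n × ZMod 2) →+ Gn n :=
  AddMonoidHom.mk' (fun p => linA n p.1 + cOne n p.2) (by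
    intro p q
    funext v
    simp only [linA, cOne, Pi.add_apply, Prod.fst_add, Prod.snd_add, dotp_add_left]
    ring)

def Usub : AddSubgroup (Gn n) := (Lmap n).range

abbrev Qt := Gn n ⧸ Usub n

lemma Lmap_inj : Function.Injective (Lmap n) := by
  rw [injective_iff_map_eq_zero]
  rintro ⟨a, c⟩ h
  have h0 : ∀ v, dotp n a v + c = 0 := by
    intro v
    have := congrFun h v
    simpa [Lmap, linA, cOne] using this
  have hc : c = 0 := by
    have := h0 0
    simpa [dotp] using this
  have ha : a = 0 := by
    funext j
    have := h0 (Pi.single j 1)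
    rw [dotp_single, hc, add_zero] at this
    exact this
  simp [ha, hc]

lemma card_Gn : Nat.card (Gn n) = 2 ^ (2 ^ n) := by
  simp [Nat.card_eq_fintype_card]

lemma card_Usub : Nat.card (Usub n) = 2 ^ (n + 1) := by
  have e1 : Nat.card (Usub n) = Nat.card (HV n × ZMod 2) :=
    (Nat.card_congr (Equiv.ofInjective (Lmap n) (Lmap_inj n))).symm
  rw [e1]
  simp [Nat.card_eq_fintype_card, pow_succ]

lemma card_Qt : Nat.card (Qt n) = 2 ^ (2 ^ n - n - 1) := by
  have h := AddSubgroup.card_eq_card_quotient_mul_card_addSubgroup (Usub n)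
  rw [card_Gn, card_Usub] at h
  have hle : n + 1 ≤ 2 ^ n := Nat.succ_le_of_lt (Nat.lt_two_pow_self (n := n))
  have hpow : 2 ^ (2 ^ n - n - 1) * 2 ^ (n + 1) = 2 ^ (2 ^ n) := by
    rw [← pow_add]
    congr 1
    omega
  have : Nat.card (Qt n) * 2 ^ (n + 1) = 2 ^ (2 ^ n - n - 1) * 2 ^ (n + 1) := by
    rw [hpow, ← h]
  exact Nat.eq_of_mul_eq_mul_right (Nat.pow_pos (by norm_num)) this

def eqv : Fin (2 ^ n) ≃ HV n :=
  (Fintype.equivFinOfCardEq (by simp)).symm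

def dec (f : Gn n) : Fin (2 ^ n) → ℝ := fun i => eps (f (eqv n i))

variable {n}

lemma dec_inj : Function.Injective (dec n) := by
  intro f g h
  funext v
  have := congrFun h ((eqv n).symm v)
  simp only [dec, Equiv.apply_symm_apply] at this
  exact eps_inj this

lemma dec_add_one (f : Gn n) : dec n (f + cOne n 1) = - dec n f := by
  funext i
  simp only [dec, Pi.add_apply, cOne, Pi.neg_apply]
  exact eps_add_one _

lemma zmod2_add_eq_zero {s t : ZMod 2} (h : s + t = 0) : s = t := by
  revert h; revert s t; decide

lemma cOne_zero : cOne n 0 = 0 := rfl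

lemma ortho (x : Gn n) {a b : HV n} (hab : a ≠ b) :
    ∑ i, dec n (x + linA n a) i * dec n (x + linA n b) i = 0 := by
  have hab0 : a + b ≠ 0 := by
    intro h
    exact hab (funext fun i => zmod2_add_eq_zero (congrFun h i))
  have key : ∀ i, dec n (x + linA n a) i * dec n (x + linA n b) i
      = eps (dotp n (a + b) (eqv n i)) := by
    intro i
    simp only [dec, Pi.add_apply, linA, eps_add, dotp_add_left]
    linear_combination eps (dotp n a (eqv n i)) * eps (dotp n b (eqv n i)) * eps_sq (x (eqv n i))
  calc ∑ i, dec n (x + linA n a) i * dec n (x + linA n b) i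
      = ∑ i, eps (dotp n (a + b) (eqv n i)) := Finset.sum_congr rfl fun i _ => key i
    _ = ∑ v, eps (dotp n (a + b) v) := Fintype.sum_equiv (eqv n) _ _ fun i => rfl
    _ = 0 := sum_eps_dot hab0

lemma mk_lin (x : Gn n) (a : HV n) (c : ZMod 2) :
    (QuotientAddGroup.mk (x + (linA n a + cOne n c)) : Qt n) = QuotientAddGroup.mk x := by
  rw [QuotientAddGroup.eq]
  have hu : linA n a + cOne n c ∈ Usub n := ⟨(a, c), rfl⟩
  have : -(x + (linA n a + cOne n c)) + x = -(linA n a + cOne n c) := by abel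
  rw [this]
  exact neg_mem hu
end HadAux

/-- A Hadamard vector: all entries are `±1`. -/
def IsHadamardVector {ι : Type*} (x : ι → ℝ) : Prop :=
  ∀ i, x i = 1 ∨ x i = -1

/-- A Hadamard matrix: all entries `±1` and rows pairwise orthogonal. -/
def IsHadamardMatrix {ι : Type*} [Fintype ι] (H : Matrix ι ι ℝ) : Prop :=
  (∀ i j, H i j = 1 ∨ H i j = -1) ∧
  ∀ i j, i ≠ j → ∑ k, H i k * H j k = 0

/-- A maximal set of distinct Hadamard vectors: a set of Hadamard vectors containing,
for every Hadamard vector `x`, exactly one of `x`, `-x`. -/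
def IsMaximalHadamardSet {ι : Type*} (S : Set (ι → ℝ)) : Prop :=
  (∀ x ∈ S, IsHadamardVector x) ∧
  ∀ x : ι → ℝ, IsHadamardVector x → Xor' (x ∈ S) (-x ∈ S)

theorem partition_maximal_hadamard_set (n : ℕ)
    (S : Set (Fin (2 ^ n) → ℝ)) (hS : IsMaximalHadamardSet S) :
    ∃ H : Fin (2 ^ (2 ^ n - n - 1)) → Matrix (Fin (2 ^ n)) (Fin (2 ^ n)) ℝ,
      (∀ t, IsHadamardMatrix (H t)) ∧
      (Pairwise fun t s => Disjoint (Set.range fun r => H t r) (Set.range fun r => H s r)) ∧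
      (⋃ t, Set.range fun r => H t r) = S := by
  classical
  obtain ⟨hS1, hS2⟩ := hS
  let φ : Fin (2 ^ (2 ^ n - n - 1)) ≃ Qt n :=
    (Finite.equivFinOfCardEq (card_Qt n)).symm
  let row : Qt n → Fin (2 ^ n) → (Fin (2 ^ n) → ℝ) := fun q r =>
    if dec n (q.out + linA n (eqv n r)) ∈ S then dec n (q.out + linA n (eqv n r))
    else - dec n (q.out + linA n (eqv n r))
  have hHad : ∀ g : Gn n, IsHadamardVector (dec n g) := fun g i => eps_cases _
  have hrow : ∀ q r, ∃ g : Gn n, row q r = dec n g ∧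
      (QuotientAddGroup.mk g : Qt n) = q ∧ row q r ∈ S := by
    intro q r
    by_cases hin : dec n (q.out + linA n (eqv n r)) ∈ S
    · refine ⟨q.out + linA n (eqv n r), by simp [row, hin], ?_, by simp [row, hin]⟩
      have h0 := mk_lin (n := n) q.out (eqv n r) 0
      rw [cOne_zero, add_zero] at h0
      rw [h0, QuotientAddGroup.out_eq']
    · have hneg : -(dec n (q.out + linA n (eqv n r))) ∈ S := by
        rcases hS2 _ (hHad (q.out + linA n (eqv n r))) with ⟨h1, _⟩ | ⟨h1, _⟩
        · exact absurd h1 hin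
        · exact h1
      refine ⟨q.out + linA n (eqv n r) + cOne n 1, ?_, ?_, ?_⟩
      · rw [dec_add_one]
        simp [row, hin]
      · have h1 := mk_lin (n := n) q.out (eqv n r) 1
        rw [← add_assoc] at h1
        rw [h1, QuotientAddGroup.out_eq']
      · simpa [row, hin] using hneg
  refine ⟨fun t => row (φ t), ?_, ?_, ?_⟩
  · intro t
    constructor
    · intro r i
      obtain ⟨g, hg, -, -⟩ := hrow (φ t) r
      show row (φ t) r i = 1 ∨ row (φ t) r i = -1
      rw [hg]
      exact hHad g i
    · intro r r' hne
      have hab : eqv n r ≠ eqv n r' := fun h => hne ((eqv n).injective h)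
      have base := ortho (n := n) ((φ t).out) hab
      show ∑ k, row (φ t) r k * row (φ t) r' k = 0
      simp only [row]
      split_ifs <;>
        first
          | exact base
          | simpa only [Pi.neg_apply, mul_neg, neg_mul, neg_neg, Finset.sum_neg_distrib,
              neg_eq_zero] using base
  · intro t s hts
    rw [Set.disjoint_left]
    rintro y ⟨r, hr⟩ ⟨r', hr'⟩
    obtain ⟨g, hg, hgq, -⟩ := hrow (φ t) r
    obtain ⟨g', hg', hgq', -⟩ := hrow (φ s) r'
    apply hts
    apply φ.injective
    rw [← hgq, ← hgq']
    congr 1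
    apply dec_inj
    rw [← hg, ← hg']
    exact hr.trans hr'.symm
  · apply subset_antisymm
    · rintro y hy
      simp only [Set.mem_iUnion, Set.mem_range] at hy
      obtain ⟨t, r, hr⟩ := hy
      obtain ⟨g, hg, -, hmem⟩ := hrow (φ t) r
      rw [← hr]
      exact hmem
    · intro y hy
      set f : Gn n := fun v => if y ((eqv n).symm v) = 1 then 0 else 1 with hf
      have hdf : dec n f = y := by
        funext i
        simp only [dec, hf, Equiv.symm_apply_apply]
        rcases hS1 y hy i with h | h
        · rw [if_pos h, h]; simp [eps]
        · rw [if_neg (by rw [h]; norm_num), h]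
          simp [eps, show ((1 : ZMod 2) ≠ 0) from by decide]
      set q : Qt n := QuotientAddGroup.mk f with hq
      have hout : (QuotientAddGroup.mk q.out : Qt n) = QuotientAddGroup.mk f :=
        QuotientAddGroup.out_eq' q
      have hmem : -q.out + f ∈ Usub n := QuotientAddGroup.eq.mp hout
      obtain ⟨⟨a, c⟩, hac⟩ := hmem
      have hac' : linA n a + cOne n c = -q.out + f := hac
      have hfx : q.out + (linA n a + cOne n c) = f := by rw [hac']; abel
      have hrange : ∀ z, row q ((eqv n).symm a) = z → y = z → y ∈ ⋃ t, Set.range fun r => (fun t => row (φ t)) t r := by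
        intro z h1 h2
        refine Set.mem_iUnion.mpr ⟨φ.symm q, (eqv n).symm a, ?_⟩
        show row (φ (φ.symm q)) ((eqv n).symm a) = y
        rw [Equiv.apply_symm_apply, h1, ← h2]
      rcases zmod2_cases c with hc | hc
      · subst hc
        rw [cOne_zero, add_zero] at hfx
        have hz : dec n (q.out + linA n a) = y := by rw [hfx, hdf]
        refine Set.mem_iUnion.mpr ⟨φ.symm q, (eqv n).symm a, ?_⟩
        show row (φ (φ.symm q)) ((eqv n).symm a) = y
        rw [Equiv.apply_symm_apply]
        simp only [row, Equiv.apply_symm_apply]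
        rw [hz, if_pos hy]
      · subst hc
        have hz : dec n (q.out + linA n a) = -y := by
          have h2 : dec n ((q.out + linA n a) + cOne n 1) = y := by
            have : (q.out + linA n a) + cOne n 1 = f := by rw [← hfx]; abel
            rw [this, hdf]
          rw [dec_add_one] at h2
          exact neg_eq_iff_eq_neg.mp h2
        have hnotin : dec n (q.out + linA n a) ∉ S := by
          rcases hS2 _ (hHad (q.out + linA n a)) with ⟨-, h2⟩ | ⟨-, h2⟩
          · exact absurd (by rw [hz, neg_neg]; exact hy) h2
          · exact h2
        refine Set.mem_iUnion.mpr ⟨φ.symm q, (eqv n).symm a, ?_⟩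
        show row (φ (φ.symm q)) ((eqv n).symm a) = y
        rw [Equiv.apply_symm_apply]
        simp only [row, Equiv.apply_symm_apply]
        rw [if_neg hnotin, hz, neg_neg]
end

section
/- Let m ≥ 1. If some maximal set of distinct Hadamard vectors in dimension m can be partitioned into Hadamard matrices, then m = 2^n for some natural number n. -/
/-- `S` is partitioned into `k` Hadamard matrices: `S` is the disjoint union of the
row sets of `k` Hadamard matrices of order `m`. -/
def PartitionedIntoHadamardMatrices {m : ℕ} (S : Set (Fin m → ℝ)) (k : ℕ) : Prop :=
  ∃ H : Fin k → Matrix (Fin m) (Fin m) ℝ,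
    (∀ t, IsHadamardMatrix (H t)) ∧
    (Pairwise fun t s => Disjoint (Set.range fun r => H t r) (Set.range fun r => H s r)) ∧
    (⋃ t, Set.range fun r => H t r) = S

lemma neg_hadamard {ι : Type*} {x : ι → ℝ} (hx : IsHadamardVector x) :
    IsHadamardVector (-x) := by
  intro i
  rcases hx i with h | h <;> simp [h]

theorem hadamard_partition_dim_pow_two (m : ℕ) (hm : 1 ≤ m)
    (S : Set (Fin m → ℝ)) (hS : IsMaximalHadamardSet S)
    (k : ℕ) (hpart : PartitionedIntoHadamardMatrices S k) :
    ∃ n : ℕ, m = 2 ^ n := by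
  obtain ⟨H, hHad, hdisj, hunion⟩ := hpart
  -- Step 1: Nat.card S = k * m via a bijection Fin k × Fin m → S
  have hmem : ∀ t r, H t r ∈ S := by
    intro t r
    rw [← hunion]
    exact Set.mem_iUnion.mpr ⟨t, ⟨r, rfl⟩⟩
  have rowinj : ∀ t, Function.Injective (fun r => H t r) := by
    intro t r r' h
    by_contra hne
    have horth := (hHad t).2 r r' hne
    have : ∀ j, H t r j * H t r' j = 1 := by
      intro j
      have := congrFun h j
      simp only at this
      rw [← this]
      rcases (hHad t).1 r j with h1 | h1 <;> simp [h1]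
    rw [Finset.sum_congr rfl (fun j _ => this j)] at horth
    simp at horth
    omega
  let Φ : Fin k × Fin m → S := fun p => ⟨H p.1 p.2, hmem p.1 p.2⟩
  have hΦbij : Function.Bijective Φ := by
    constructor
    · rintro ⟨t, r⟩ ⟨s, r'⟩ h
      have hval : H t r = H s r' := congrArg Subtype.val h
      rcases eq_or_ne t s with rfl | hts
      · exact Prod.ext rfl (rowinj t hval)
      · exact absurd (Set.disjoint_left.mp (hdisj hts) ⟨r, rfl⟩ ⟨r', hval.symm⟩) id
    · rintro ⟨x, hx⟩
      rw [← hunion] at hx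
      obtain ⟨t, ⟨r, hr⟩⟩ := Set.mem_iUnion.mp hx
      exact ⟨(t, r), Subtype.ext hr⟩
  have hcardS : Nat.card S = k * m := by
    rw [← Nat.card_eq_of_bijective Φ hΦbij]
    simp [Nat.card_eq_fintype_card]
  -- Step 2: Nat.card T = 2 * Nat.card S where T = Hadamard vectors
  set T := {x : Fin m → ℝ | IsHadamardVector x} with hT
  have hmemT : ∀ x ∈ S, x ∈ T := fun x hx => hS.1 x hx
  let G : Bool × S → T := fun p =>
    if h : p.1 = true then ⟨p.2.1, hS.1 _ p.2.2⟩
    else ⟨-p.2.1, neg_hadamard (hS.1 _ p.2.2)⟩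
  have hGbij : Function.Bijective G := by
    constructor
    · rintro ⟨b, x, hx⟩ ⟨b', x', hx'⟩ h
      have hval := congrArg Subtype.val h
      cases b <;> cases b' <;> simp [G] at hval
      · exact Prod.ext rfl (Subtype.ext hval)
      · exfalso
        rcases hS.2 x (hS.1 x hx) with ⟨_, hn⟩ | ⟨_, hn⟩
        · exact hn (hval ▸ hx')
        · exact hn hx
      · exfalso
        rcases hS.2 x' (hS.1 x' hx') with ⟨_, hn⟩ | ⟨_, hn⟩
        · exact hn (hval ▸ hx)
        · exact hn hx'
      · exact Prod.ext rfl (Subtype.ext hval)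
    · rintro ⟨y, hy⟩
      rcases hS.2 y hy with ⟨hyS, _⟩ | ⟨hnS, _⟩
      · exact ⟨(true, ⟨y, hyS⟩), rfl⟩
      · refine ⟨(false, ⟨-y, hnS⟩), ?_⟩
        simp [G]
  have hcardT : Nat.card T = 2 * Nat.card S := by
    rw [← Nat.card_eq_of_bijective G hGbij, Nat.card_prod]
    simp
  -- Step 3: Nat.card T = 2 ^ m via bijection with Fin m → Bool
  let F : (Fin m → Bool) → T := fun b =>
    ⟨fun i => if b i then 1 else -1, fun i => by by_cases h : b i <;> simp [h]⟩
  have hFbij : Function.Bijective F := by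
    constructor
    · intro b b' h
      have hval := congrArg Subtype.val h
      funext i
      have := congrFun hval i
      by_cases h1 : b i <;> by_cases h2 : b' i <;> simp [h1, h2] at this ⊢
      · norm_num [F, h1, h2] at this
      · norm_num [F, h1, h2] at this
    · rintro ⟨y, hy⟩
      refine ⟨fun i => if y i = 1 then true else false, ?_⟩
      apply Subtype.ext
      funext i
      rcases hy i with h | h <;> simp [F, h] <;> norm_num
  have hcardT2 : Nat.card T = 2 ^ m := by
    rw [← Nat.card_eq_of_bijective F hFbij]
    simp [Nat.card_eq_fintype_card]
  -- Combine
  have key : 2 * (k * m) = 2 ^ m := by rw [← hcardS, ← hcardT, hcardT2]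
  have hm' : 2 ^ m = 2 * 2 ^ (m - 1) := by
    conv_lhs => rw [show m = (m - 1) + 1 by omega]
    ring
  have hkm : k * m = 2 ^ (m - 1) := by omega
  have hdvd : m ∣ 2 ^ (m - 1) := ⟨k, by rw [← hkm]; ring⟩
  obtain ⟨n, _, hn⟩ := (Nat.dvd_prime_pow Nat.prime_two).mp hdvd
  exact ⟨n, hn⟩
end

section
/- In dimension 4, every maximal set of distinct Hadamard vectors can be partitioned into exactly 2 Hadamard matrices; that is, the 8 vectors of such a set split into two disjoint 4-element subsets, each of which is the set of rows of a 4×4 Hadamard matrix. -/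
/-- Table of positions of the `-1` entries of the eight reference sign vectors. -/
def hadNeg : List (Fin 8 × Fin 4) :=
  [(1,2),(1,3),(2,1),(2,3),(3,1),(3,2),(4,1),(5,2),(6,3),(7,1),(7,2),(7,3)]

def hadZ (i : Fin 8) (k : Fin 4) : ℤ :=
  if (i, k) ∈ hadNeg then -1 else 1

/-- The eight reference sign vectors (first coordinate `1`). -/
def hadV (i : Fin 8) (k : Fin 4) : ℝ := ((hadZ i k : ℤ) : ℝ)

lemma hadZ_pm : ∀ i k, hadZ i k = 1 ∨ hadZ i k = -1 := by decide

lemma hadV_vec (i : Fin 8) : IsHadamardVector (hadV i) := by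
  intro k
  rcases hadZ_pm i k with h | h <;> simp [hadV, h]

lemma hadZ_zero : ∀ i, hadZ i 0 = 1 := by decide

lemma hadV_zero (i : Fin 8) : hadV i 0 = 1 := by simp [hadV, hadZ_zero]

lemma hadV_ne_neg (i j : Fin 8) : hadV i ≠ -hadV j := by
  intro h
  have h0 := congrFun h 0
  rw [hadV_zero, Pi.neg_apply, hadV_zero] at h0
  norm_num at h0

lemma hadZ_ne : ∀ i j : Fin 8, i ≠ j → ∃ k, hadZ i k ≠ hadZ j k := by decide

lemma hadV_ne {i j : Fin 8} (h : i ≠ j) : hadV i ≠ hadV j := by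
  intro he
  obtain ⟨k, hk⟩ := hadZ_ne i j h
  exact hk (Int.cast_injective (congrFun he k))

lemma hadZ_orth : ∀ i j : Fin 8, i ≠ j → ((i.val < 4 ∧ j.val < 4) ∨ (4 ≤ i.val ∧ 4 ≤ j.val)) →
    ∑ k, hadZ i k * hadZ j k = 0 := by decide

lemma hadV_orth (i j : Fin 8) (hij : i ≠ j) (hc : (i.val < 4 ∧ j.val < 4) ∨ (4 ≤ i.val ∧ 4 ≤ j.val)) :
    ∑ k, hadV i k * hadV j k = 0 := by
  have h := hadZ_orth i j hij hc
  have h' : ((∑ k, hadZ i k * hadZ j k : ℤ) : ℝ) = 0 := by rw [h]; norm_num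
  unfold hadV
  exact_mod_cast h'

lemma hadZ_surj : ∀ f : Fin 4 → Bool, f 0 = true →
    ∃ i, ∀ k, hadZ i k = if f k then 1 else -1 := by decide

lemma hadV_surj {x : Fin 4 → ℝ} (hx : IsHadamardVector x) (h0 : x 0 = 1) :
    ∃ i, hadV i = x := by
  classical
  obtain ⟨i, hi⟩ := hadZ_surj (fun k => decide (x k = 1)) (by simp [h0])
  refine ⟨i, funext fun k => ?_⟩
  have := hi k
  by_cases h : x k = 1
  · simp [h] at this; simp [hadV, this, h]
  · have hx' : x k = -1 := (hx k).resolve_left h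
    simp [h] at this; simp [hadV, this, hx']

theorem hadamard_partition_dim_four (S : Set (Fin 4 → ℝ)) (hS : IsMaximalHadamardSet S) :
    ∃ H₁ H₂ : Matrix (Fin 4) (Fin 4) ℝ,
      IsHadamardMatrix H₁ ∧ IsHadamardMatrix H₂ ∧
      Disjoint (Set.range fun r => H₁ r) (Set.range fun r => H₂ r) ∧
      (Set.range fun r => H₁ r) ∪ (Set.range fun r => H₂ r) = S := by
  classical
  obtain ⟨hSH, hSx⟩ := hS
  -- choose the representative of each reference vector that lies in S
  have hex : ∀ i : Fin 8, ∃ y, y ∈ S ∧ (y = hadV i ∨ y = -hadV i) := by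
    intro i
    rcases hSx (hadV i) (hadV_vec i) with ⟨h1, _⟩ | ⟨h1, _⟩
    exacts [⟨hadV i, h1, Or.inl rfl⟩, ⟨-hadV i, h1, Or.inr rfl⟩]
  choose t htS ht using hex
  -- basic properties of t
  have htvec : ∀ i, IsHadamardVector (t i) := fun i => hSH _ (htS i)
  have htne : ∀ i j : Fin 8, i ≠ j → t i ≠ t j := by
    intro i j hij
    rcases ht i with h | h <;> rcases ht j with h' | h' <;> rw [h, h']
    · exact hadV_ne hij
    · exact hadV_ne_neg i j
    · intro he; exact hadV_ne_neg j i he.symm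
    · intro he; exact hadV_ne hij (neg_injective he)
  have htorth : ∀ i j : Fin 8, i ≠ j → ((i.val < 4 ∧ j.val < 4) ∨ (4 ≤ i.val ∧ 4 ≤ j.val)) →
      ∑ k, t i k * t j k = 0 := by
    intro i j hij hc
    have h0 := hadV_orth i j hij hc
    rcases ht i with h | h <;> rcases ht j with h' | h' <;> rw [h, h'] <;>
      first
        | exact h0
        | (simp only [Pi.neg_apply, neg_mul, mul_neg, neg_neg, Finset.sum_neg_distrib,
              neg_eq_zero]
           exact h0)
  -- every element of S is some t i
  have hrep : ∀ x ∈ S, ∃ i, t i = x := by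
    intro x hx
    have hxv := hSH x hx
    have hnotneg : -x ∉ S := by
      rcases hSx x hxv with ⟨_, h2⟩ | ⟨_, h2⟩
      · exact h2
      · exact absurd hx h2
    have h0 := hxv 0
    have hiv : ∃ i, hadV i = x ∨ hadV i = -x := by
      rcases h0 with h0 | h0
      · obtain ⟨i, hi⟩ := hadV_surj hxv h0
        exact ⟨i, Or.inl hi⟩
      · have : IsHadamardVector (-x) := by
          intro k; rcases hxv k with h | h <;> simp [h]
        obtain ⟨i, hi⟩ := hadV_surj this (by simp [h0])
        exact ⟨i, Or.inr hi⟩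
    obtain ⟨i, hi⟩ := hiv
    refine ⟨i, ?_⟩
    rcases ht i with h | h <;> rcases hi with h' | h'
    · rw [h, h']
    · exact absurd (by rw [← h'.trans rfl, ← h]; exact htS i) hnotneg
    · have : t i = -x := by rw [h, h']
      exact absurd (this ▸ htS i) hnotneg
    · rw [h, h', neg_neg]
  -- the two matrices
  set f₁ : Fin 4 → Fin 8 := fun r => ⟨r.val, by omega⟩ with hf₁
  set f₂ : Fin 4 → Fin 8 := fun r => ⟨r.val + 4, by omega⟩ with hf₂
  refine ⟨Matrix.of fun r => t (f₁ r), Matrix.of fun r => t (f₂ r), ?_, ?_, ?_, ?_⟩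
  · constructor
    · intro r j; exact htvec _ j
    · intro r r' hrr'
      refine htorth _ _ (fun he => hrr' ?_) (Or.inl ⟨by simp [hf₁], by simp [hf₁]⟩)
      have : (f₁ r).val = (f₁ r').val := by rw [he]
      simp only [hf₁] at this
      exact Fin.ext this
  · constructor
    · intro r j; exact htvec _ j
    · intro r r' hrr'
      refine htorth _ _ (fun he => hrr' ?_) (Or.inr ⟨by simp [hf₂], by simp [hf₂]⟩)
      have : (f₂ r).val = (f₂ r').val := by rw [he]
      simp only [hf₂] at this
      exact Fin.ext (by omega)
  · rw [Set.disjoint_left]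
    rintro x ⟨a, rfl⟩ ⟨b, hb⟩
    refine htne (f₂ b) (f₁ a) ?_ hb
    intro he
    have : (f₂ b).val = (f₁ a).val := by rw [he]
    simp only [hf₁, hf₂] at this
    omega
  · apply Set.eq_of_subset_of_subset
    · rintro x (⟨a, rfl⟩ | ⟨a, rfl⟩) <;> exact htS _
    · intro x hx
      obtain ⟨i, hi⟩ := hrep x hx
      by_cases hlt : i.val < 4
      · exact Or.inl ⟨⟨i.val, hlt⟩, by show t (f₁ ⟨i.val, hlt⟩) = x; simpa [hf₁] using hi⟩
      · refine Or.inr ⟨⟨i.val - 4, by omega⟩, ?_⟩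
        show t (f₂ ⟨i.val - 4, by omega⟩) = x
        have hfi : f₂ ⟨i.val - 4, by omega⟩ = i := by
          simp only [hf₂]
          exact Fin.ext (by simp; omega)
        rw [hfi]
        exact hi
end

section
/- If there exists an m×m Hadamard matrix with m > 2, then 4 divides m. -/
theorem hadamard_order_div_four (m : ℕ) (hm : 2 < m)
    (h : ∃ H : Matrix (Fin m) (Fin m) ℝ, IsHadamardMatrix H) :
    4 ∣ m := by
  obtain ⟨H, hpm, horth⟩ := h
  set i0 : Fin m := ⟨0, by omega⟩ with hi0
  set i1 : Fin m := ⟨1, by omega⟩ with hi1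
  set i2 : Fin m := ⟨2, by omega⟩ with hi2
  have h01 : i0 ≠ i1 := by simp [hi0, hi1, Fin.ext_iff]
  have h02 : i0 ≠ i2 := by simp [hi0, hi2, Fin.ext_iff]
  have h12 : i1 ≠ i2 := by simp [hi1, hi2, Fin.ext_iff]
  have key : ∑ k, (H i0 k + H i1 k) * (H i0 k + H i2 k) = (m : ℝ) := by
    have expand : ∀ k, (H i0 k + H i1 k) * (H i0 k + H i2 k) =
        H i0 k * H i0 k + H i0 k * H i2 k + H i1 k * H i0 k + H i1 k * H i2 k := by
      intro k; ring
    rw [Finset.sum_congr rfl fun k _ => expand k]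
    have h00 : ∑ k, H i0 k * H i0 k = (m : ℝ) := by
      have : ∀ k : Fin m, H i0 k * H i0 k = 1 := by
        intro k; rcases hpm i0 k with h | h <;> rw [h] <;> norm_num
      rw [Finset.sum_congr rfl fun k _ => this k]
      simp
    simp only [Finset.sum_add_distrib, h00, horth i0 i2 h02, horth i1 i0 h01.symm,
      horth i1 i2 h12]
    ring
  have hz : ∀ k : Fin m, ∃ z : ℤ,
      (H i0 k + H i1 k) * (H i0 k + H i2 k) = (4 * z : ℤ) := by
    intro k
    rcases hpm i0 k with h0 | h0 <;> rcases hpm i1 k with h1 | h1 <;>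
      rcases hpm i2 k with h2 | h2 <;> rw [h0, h1, h2]
    · exact ⟨1, by norm_num⟩
    · exact ⟨0, by norm_num⟩
    · exact ⟨0, by norm_num⟩
    · exact ⟨0, by norm_num⟩
    · exact ⟨0, by norm_num⟩
    · exact ⟨0, by norm_num⟩
    · exact ⟨0, by norm_num⟩
    · exact ⟨1, by norm_num⟩
  choose g hg using hz
  have : (m : ℝ) = ((4 * ∑ k, g k : ℤ) : ℝ) := by
    rw [← key, Finset.sum_congr rfl fun k _ => hg k]
    push_cast
    rw [Finset.mul_sum]
  have hint : (m : ℤ) = 4 * ∑ k, g k := by exact_mod_cast this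
  have : (4 : ℤ) ∣ (m : ℤ) := ⟨∑ k, g k, hint⟩
  exact_mod_cast this
end

section
/- Let m = 2^n and suppose {A_i}_{i=1}^{N}, with N = 2^(2^n - n - 1), are m×m Hadamard matrices whose combined rows form a maximal set of distinct Hadamard vectors in dimension m. For each pair (i, j) with 1 ≤ i, j ≤ N and each k with 1 ≤ k ≤ m, form the 2m×2m matrix M_{i,j,k} = [[A_i, T^k A_j], [A_i, -T^k A_j]], where T is the cyclic row shift. Then each M_{i,j,k} is a 2m×2m Hadamard matrix, the rows of the N²·m = 2^(2^(n+1) - (n+1) - 1) matrices M_{i,j,k} are pairwise distinct even up to sign (no row of one equals ± a row of another, and within one matrix no two rows are equal up to sign), and together these rows form a maximal set of distinct Hadamard vectors in dimension 2m = 2^(n+1). -/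
/-- The cyclic row shift: `(rowShift A) i = A (i - 1)`, indices mod `m`
(`finRotate m` sends `i` to `i + 1`). -/
def rowShift {m : ℕ} (A : Matrix (Fin m) (Fin m) ℝ) : Matrix (Fin m) (Fin m) ℝ :=
  Matrix.of fun i => A ((finRotate m).symm i)

/-- The `2m × 2m` block matrix `[[A, T^k B], [A, -(T^k B)]]`. -/
def doubledBlock {m : ℕ} (A B : Matrix (Fin m) (Fin m) ℝ) (k : ℕ) :
    Matrix (Fin m ⊕ Fin m) (Fin m ⊕ Fin m) ℝ :=
  Matrix.fromBlocks A (rowShift^[k] B) A (-(rowShift^[k] B))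

/- ----------------- auxiliary lemmas ----------------- -/

open Fin.NatCast Fin.CommRing

lemma finRotate_symm_apply' {m : ℕ} [NeZero m] (i : Fin m) : (finRotate m).symm i = i - 1 := by
  cases m with
  | zero => exact i.elim0
  | succ m => rw [Equiv.symm_apply_eq, finRotate_succ_apply, sub_add_cancel]

lemma finRotate_symm_iterate {m : ℕ} [NeZero m] (k : ℕ) (i : Fin m) :
    ((finRotate m).symm)^[k] i = i - (k : Fin m) := by
  induction k with
  | zero => simp
  | succ k ih =>
    rw [Function.iterate_succ_apply', ih, finRotate_symm_apply']
    push_cast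
    ring

lemma rowShift_iterate_apply {m : ℕ} (B : Matrix (Fin m) (Fin m) ℝ) (k : ℕ) (i : Fin m) :
    (rowShift^[k] B) i = B (((finRotate m).symm)^[k] i) := by
  induction k generalizing i with
  | zero => rfl
  | succ k ih =>
    rw [Function.iterate_succ_apply']
    show (rowShift^[k] B) ((finRotate m).symm i) = _
    rw [ih, Function.iterate_succ_apply]

lemma sum_sq_hadamard {m : ℕ} {x : Fin m → ℝ} (hx : IsHadamardVector x) :
    ∑ k, x k * x k = m := by
  have h : ∀ k, x k * x k = 1 := fun k => by rcases hx k with h | h <;> rw [h] <;> norm_num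
  simp [h]

lemma rowShift_hadamard {m : ℕ} {B : Matrix (Fin m) (Fin m) ℝ}
    (hB : IsHadamardMatrix B) (k : ℕ) : IsHadamardMatrix (rowShift^[k] B) := by
  constructor
  · intro i j; rw [rowShift_iterate_apply]; exact hB.1 _ j
  · intro i j hij
    simp_rw [rowShift_iterate_apply]
    exact hB.2 _ _ fun h => hij (((finRotate m).symm.injective.iterate k) h)

lemma doubled_hadamard {m : ℕ} {A B : Matrix (Fin m) (Fin m) ℝ}
    (hA : IsHadamardMatrix A) (hB : IsHadamardMatrix B) (k : ℕ) :
    IsHadamardMatrix (doubledBlock A B k) := by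
  have hC := rowShift_hadamard hB k
  constructor
  · rintro (i | i) (j | j)
    · exact hA.1 i j
    · exact hC.1 i j
    · exact hA.1 i j
    · rcases hC.1 i j with h | h <;>
        simp only [doubledBlock, Matrix.fromBlocks_apply₂₂, Matrix.neg_apply, h] <;>
        norm_num
  · have hnorm : ∀ (M : Matrix (Fin m) (Fin m) ℝ), IsHadamardMatrix M → ∀ r,
        ∑ c, M r c * M r c = m := fun M hM r => sum_sq_hadamard (fun c => hM.1 r c)
    rintro (r | r) (s | s) hrs <;>
      simp only [doubledBlock, Fintype.sum_sum_type, Matrix.fromBlocks_apply₁₁,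
        Matrix.fromBlocks_apply₁₂, Matrix.fromBlocks_apply₂₁, Matrix.fromBlocks_apply₂₂,
        Matrix.neg_apply, mul_neg, neg_mul, neg_neg, Finset.sum_neg_distrib]
    · have h : r ≠ s := fun h => hrs (by rw [h])
      rw [hA.2 r s h, hC.2 r s h, add_zero]
    · by_cases h : r = s
      · subst h; rw [hnorm A hA r, hnorm _ hC r]; ring
      · rw [hA.2 r s h, hC.2 r s h]; ring
    · by_cases h : r = s
      · subst h; rw [hnorm A hA r, hnorm _ hC r]; ring
      · rw [hA.2 r s h, hC.2 r s h]; ring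
    · have h : r ≠ s := fun h => hrs (by rw [h])
      rw [hA.2 r s h, hC.2 r s h]; ring

lemma hadamard_rows_inj {N m : ℕ} (A : Fin N → Matrix (Fin m) (Fin m) ℝ)
    (hmax : IsMaximalHadamardSet (⋃ i, Set.range fun r => A i r))
    (hcard : 2 * (N * m) = 2 ^ m) :
    (∀ i r j s, A i r = A j s → i = j ∧ r = s) ∧ (∀ i r j s, A i r ≠ - A j s) := by
  classical
  set S : Set (Fin m → ℝ) := ⋃ i, Set.range fun r => A i r with hS
  set f : Bool × (Fin N × Fin m) → (Fin m → Bool) :=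
    fun p c => if p.1 then decide (A p.2.1 p.2.2 c = 1) else decide (-(A p.2.1 p.2.2) c = 1)
    with hf
  have hsurj : Function.Surjective f := by
    intro b
    set x : Fin m → ℝ := fun c => if b c then 1 else -1 with hxdef
    have hx : IsHadamardVector x := by
      intro c; by_cases h : b c <;> simp [hxdef, h]
    have hgx : ∀ c, decide (x c = 1) = b c := by
      intro c; by_cases h : b c <;> simp [hxdef, h] <;> norm_num
    have hor : x ∈ S ∨ -x ∈ S := Or.imp And.left And.left (hmax.2 x hx)
    rcases hor with h | h
    · simp only [hS, Set.mem_iUnion, Set.mem_range] at h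
      obtain ⟨i, r, hr⟩ := h
      refine ⟨(true, (i, r)), ?_⟩
      funext c
      rw [hf]
      simp only [if_true]
      rw [hr]
      exact hgx c
    · simp only [hS, Set.mem_iUnion, Set.mem_range] at h
      obtain ⟨i, r, hr⟩ := h
      refine ⟨(false, (i, r)), ?_⟩
      funext c
      simp only [hf, if_neg Bool.false_ne_true]
      have h2 : -(A i r c) = x c := by
        have h3 := congrFun hr c
        simp only [Pi.neg_apply] at h3
        rw [h3, neg_neg]
      rw [h2]
      exact hgx c
  have hinj : Function.Injective f := by
    have hc : Fintype.card (Bool × (Fin N × Fin m)) = Fintype.card (Fin m → Bool) := by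
      simp [hcard]
    exact Finite.injective_iff_surjective_of_equiv (Fintype.equivOfCardEq hc) |>.mpr hsurj
  constructor
  · intro i r j s h
    have := hinj (a₁ := (true, (i, r))) (a₂ := (true, (j, s))) (by
      funext c; simp only [hf, if_pos rfl, h])
    simpa [Prod.ext_iff] using this
  · intro i r j s h
    have := hinj (a₁ := (true, (i, r))) (a₂ := (false, (j, s))) (by
      funext c
      simp only [hf, if_pos rfl, if_neg Bool.false_ne_true, h, Pi.neg_apply])
    simp [Prod.ext_iff] at this

theorem hadamard_induction_step (n : ℕ)
    (A : Fin (2 ^ (2 ^ n - n - 1)) → Matrix (Fin (2 ^ n)) (Fin (2 ^ n)) ℝ)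
    (hA : ∀ i, IsHadamardMatrix (A i))
    (hmax : IsMaximalHadamardSet (⋃ i, Set.range fun r => A i r)) :
    -- the number of matrices formed is `N² · m = 2^(2^(n+1) - (n+1) - 1)`
    (2 ^ (2 ^ n - n - 1)) ^ 2 * 2 ^ n = 2 ^ (2 ^ (n + 1) - (n + 1) - 1) ∧
    -- each `M_{i,j,k} = [[A_i, T^k A_j], [A_i, -T^k A_j]]` is a `2m × 2m` Hadamard matrix
    (∀ i j, ∀ k : ℕ, 1 ≤ k → k ≤ 2 ^ n → IsHadamardMatrix (doubledBlock (A i) (A j) k)) ∧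
    -- the rows of the matrices `M_{i,j,k}` are pairwise distinct even up to sign
    (∀ i j, ∀ k : ℕ, 1 ≤ k → k ≤ 2 ^ n → ∀ i' j', ∀ k' : ℕ, 1 ≤ k' → k' ≤ 2 ^ n →
      ∀ r r' : Fin (2 ^ n) ⊕ Fin (2 ^ n), (i, j, k, r) ≠ (i', j', k', r') →
        doubledBlock (A i) (A j) k r ≠ doubledBlock (A i') (A j') k' r' ∧
        doubledBlock (A i) (A j) k r ≠ -(doubledBlock (A i') (A j') k' r')) ∧
    -- together these rows form a maximal set of distinct Hadamard vectors in dimension `2m`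
    IsMaximalHadamardSet
      (⋃ i, ⋃ j, ⋃ k ∈ Finset.Icc 1 (2 ^ n),
        Set.range fun r => doubledBlock (A i) (A j) k r) := by
  classical
  have hm1 : 0 < 2 ^ n := Nat.pow_pos (by norm_num)
  haveI : NeZero (2 ^ n) := ⟨hm1.ne'⟩
  have hnm : n + 1 ≤ 2 ^ n := Nat.lt_two_pow_self
  -- counting fact
  have hcard : 2 * (2 ^ (2 ^ n - n - 1) * 2 ^ n) = 2 ^ 2 ^ n := by
    have h1 : (1 : ℕ) + (2 ^ n - n - 1) + n = 2 ^ n := by omega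
    calc 2 * (2 ^ (2 ^ n - n - 1) * 2 ^ n) = 2 ^ (1 + (2 ^ n - n - 1) + n) := by
          rw [pow_add, pow_add, pow_one]; ring
      _ = 2 ^ 2 ^ n := by rw [h1]
  obtain ⟨hkey1, hkey2⟩ := hadamard_rows_inj A hmax hcard
  -- part 1
  have part1 : (2 ^ (2 ^ n - n - 1)) ^ 2 * 2 ^ n = 2 ^ (2 ^ (n + 1) - (n + 1) - 1) := by
    rw [← pow_mul, ← pow_add]
    congr 1
    have h2 : 2 ^ (n + 1) = 2 * 2 ^ n := by rw [pow_succ]; ring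
    omega
  -- part 2
  have part2 : ∀ i j, ∀ k : ℕ, 1 ≤ k → k ≤ 2 ^ n →
      IsHadamardMatrix (doubledBlock (A i) (A j) k) :=
    fun i j k _ _ => doubled_hadamard (hA i) (hA j) k
  -- shift formula and row descriptions
  have hshift : ∀ (B : Matrix (Fin (2 ^ n)) (Fin (2 ^ n)) ℝ) (k : ℕ) (r : Fin (2 ^ n)),
      (rowShift^[k] B) r = B (r - (k : Fin (2 ^ n))) := by
    intro B k r
    rw [rowShift_iterate_apply, finRotate_symm_iterate]
  have hrow1 : ∀ i j (k : ℕ) (r : Fin (2 ^ n)), doubledBlock (A i) (A j) k (Sum.inl r)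
      = Sum.elim (A i r) (A j (r - (k : Fin (2 ^ n)))) := by
    intro i j k r
    funext c
    cases c with
    | inl c => rfl
    | inr c =>
      show (rowShift^[k] (A j)) r c = _
      rw [hshift]
      rfl
  have hrow2 : ∀ i j (k : ℕ) (r : Fin (2 ^ n)), doubledBlock (A i) (A j) k (Sum.inr r)
      = Sum.elim (A i r) (-(A j (r - (k : Fin (2 ^ n))))) := by
    intro i j k r
    funext c
    cases c with
    | inl c => rfl
    | inr c =>
      show (-(rowShift^[k] (A j))) r c = _
      rw [Matrix.neg_apply, hshift]
      rfl
  have helim : ∀ (u v u' v' : Fin (2 ^ n) → ℝ),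
      Sum.elim u v = Sum.elim u' v' → u = u' ∧ v = v' := by
    intro u v u' v' h
    exact ⟨funext fun c => congrFun h (Sum.inl c), funext fun c => congrFun h (Sum.inr c)⟩
  have hneg : ∀ (u v : Fin (2 ^ n) → ℝ), -(Sum.elim u v) = Sum.elim (-u) (-v) := by
    intro u v; funext c; cases c <;> rfl
  -- natCast injectivity on [1, m]
  have hkk : ∀ k k' : ℕ, 1 ≤ k → k ≤ 2 ^ n → 1 ≤ k' → k' ≤ 2 ^ n →
      (k : Fin (2 ^ n)) = (k' : Fin (2 ^ n)) → k = k' := by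
    intro k k' h1 h2 h3 h4 h
    have hv : k % 2 ^ n = k' % 2 ^ n := by
      have := congrArg Fin.val h
      simpa [Fin.val_natCast] using this
    rcases eq_or_lt_of_le h2 with rfl | hlt
    · rcases eq_or_lt_of_le h4 with rfl | hlt'
      · rfl
      · rw [Nat.mod_self, Nat.mod_eq_of_lt hlt'] at hv; omega
    · rcases eq_or_lt_of_le h4 with rfl | hlt'
      · rw [Nat.mod_self, Nat.mod_eq_of_lt hlt] at hv; omega
      · rw [Nat.mod_eq_of_lt hlt, Nat.mod_eq_of_lt hlt'] at hv; exact hv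
  -- choice of the shift
  have hchoose : ∀ a b : Fin (2 ^ n), ∃ k : ℕ, 1 ≤ k ∧ k ≤ 2 ^ n ∧
      a - (k : Fin (2 ^ n)) = b := by
    intro a b
    by_cases h : a - b = 0
    · refine ⟨2 ^ n, hm1, le_refl _, ?_⟩
      rw [Fin.natCast_self, sub_zero]
      exact sub_eq_zero.mp h
    · refine ⟨(a - b).val, ?_, le_of_lt (a - b).isLt, ?_⟩
      · have : (a - b).val ≠ 0 := fun hh => h (Fin.ext hh)
        omega
      · rw [Fin.cast_val_eq_self]
        exact sub_sub_cancel a b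
  -- part 3
  have part3 : ∀ i j, ∀ k : ℕ, 1 ≤ k → k ≤ 2 ^ n → ∀ i' j', ∀ k' : ℕ, 1 ≤ k' → k' ≤ 2 ^ n →
      ∀ r r' : Fin (2 ^ n) ⊕ Fin (2 ^ n), (i, j, k, r) ≠ (i', j', k', r') →
        doubledBlock (A i) (A j) k r ≠ doubledBlock (A i') (A j') k' r' ∧
        doubledBlock (A i) (A j) k r ≠ -(doubledBlock (A i') (A j') k' r') := by
    intro i j k hk1 hk2 i' j' k' hk1' hk2' r r' hne
    constructor
    · intro h
      rcases r with a | a <;> rcases r' with a' | a'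
      · rw [hrow1, hrow1] at h
        obtain ⟨h1, h2⟩ := helim _ _ _ _ h
        obtain ⟨hii, haa⟩ := hkey1 _ _ _ _ h1
        obtain ⟨hjj, hbb⟩ := hkey1 _ _ _ _ h2
        rw [haa] at hbb
        have hk : k = k' := hkk k k' hk1 hk2 hk1' hk2' (sub_right_injective hbb)
        exact hne (by rw [hii, hjj, hk, haa])
      · rw [hrow1, hrow2] at h
        obtain ⟨h1, h2⟩ := helim _ _ _ _ h
        exact hkey2 _ _ _ _ h2
      · rw [hrow2, hrow1] at h
        obtain ⟨h1, h2⟩ := helim _ _ _ _ h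
        exact hkey2 _ _ _ _ h2.symm
      · rw [hrow2, hrow2] at h
        obtain ⟨h1, h2⟩ := helim _ _ _ _ h
        obtain ⟨hii, haa⟩ := hkey1 _ _ _ _ h1
        obtain ⟨hjj, hbb⟩ := hkey1 _ _ _ _ (neg_injective h2)
        rw [haa] at hbb
        have hk : k = k' := hkk k k' hk1 hk2 hk1' hk2' (sub_right_injective hbb)
        exact hne (by rw [hii, hjj, hk, haa])
    · intro h
      rcases r with a | a <;> rcases r' with a' | a' <;>
        [rw [hrow1, hrow1, hneg] at h; rw [hrow1, hrow2, hneg] at h;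
         rw [hrow2, hrow1, hneg] at h; rw [hrow2, hrow2, hneg] at h] <;>
        exact hkey2 _ _ _ _ (helim _ _ _ _ h).1
  refine ⟨part1, part2, part3, ?_, ?_⟩
  · intro x hx
    simp only [Set.mem_iUnion, Set.mem_range, Finset.mem_Icc] at hx
    obtain ⟨i, j, k, ⟨hk1, hk2⟩, r, rfl⟩ := hx
    exact fun c => (doubled_hadamard (hA i) (hA j) k).1 r c
  · intro x hx
    have hxe : x = Sum.elim (fun c => x (Sum.inl c)) (fun c => x (Sum.inr c)) := by
      funext c; cases c <;> rfl
    set u : Fin (2 ^ n) → ℝ := fun c => x (Sum.inl c) with hu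
    set v : Fin (2 ^ n) → ℝ := fun c => x (Sum.inr c) with hv
    have huH : IsHadamardVector u := fun c => hx (Sum.inl c)
    have hvH : IsHadamardVector v := fun c => hx (Sum.inr c)
    have hmemS : ∀ y : Fin (2 ^ n) → ℝ,
        y ∈ (⋃ i, Set.range fun r => A i r) ↔ ∃ i r, A i r = y := by
      intro y; simp [Set.mem_iUnion]
    have hbuild : ∀ (u v : Fin (2 ^ n) → ℝ), (∃ i a, A i a = u) →
        ((∃ j b, A j b = v) ∨ (∃ j b, A j b = -v)) →
        Sum.elim u v ∈ (⋃ i, ⋃ j, ⋃ k ∈ Finset.Icc 1 (2 ^ n),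
          Set.range fun r => doubledBlock (A i) (A j) k r) := by
      rintro u v ⟨i, a, rfl⟩ hvS
      simp only [Set.mem_iUnion, Set.mem_range, Finset.mem_Icc]
      rcases hvS with ⟨j, b, hb⟩ | ⟨j, b, hb⟩
      · obtain ⟨k, hk1, hk2, hk⟩ := hchoose a b
        exact ⟨i, j, k, ⟨hk1, hk2⟩, Sum.inl a, by rw [hrow1, hk, hb]⟩
      · obtain ⟨k, hk1, hk2, hk⟩ := hchoose a b
        exact ⟨i, j, k, ⟨hk1, hk2⟩, Sum.inr a, by rw [hrow2, hk, hb, neg_neg]⟩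
    have hu' : (∃ i a, A i a = u) ∨ (∃ i a, A i a = -u) := by
      have := Or.imp And.left And.left (hmax.2 u huH)
      rcases this with h | h
      · exact Or.inl ((hmemS u).mp h)
      · exact Or.inr ((hmemS (-u)).mp h)
    have hv' : (∃ j b, A j b = v) ∨ (∃ j b, A j b = -v) := by
      have := Or.imp And.left And.left (hmax.2 v hvH)
      rcases this with h | h
      · exact Or.inl ((hmemS v).mp h)
      · exact Or.inr ((hmemS (-v)).mp h)
    have hOr : x ∈ (⋃ i, ⋃ j, ⋃ k ∈ Finset.Icc 1 (2 ^ n),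
          Set.range fun r => doubledBlock (A i) (A j) k r) ∨
        -x ∈ (⋃ i, ⋃ j, ⋃ k ∈ Finset.Icc 1 (2 ^ n),
          Set.range fun r => doubledBlock (A i) (A j) k r) := by
      rcases hu' with h | h
      · left
        rw [hxe]
        exact hbuild u v h hv'
      · right
        have hnx : -x = Sum.elim (-u) (-v) := by rw [hxe, hneg]
        rw [hnx]
        refine hbuild (-u) (-v) h ?_
        rcases hv' with h2 | h2
        · exact Or.inr (by rw [neg_neg]; exact h2)
        · exact Or.inl h2
    have hxx : x ≠ -x := by
      intro hcontra
      have h0 := congrFun hcontra (Sum.inl ⟨0, hm1⟩)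
      rw [Pi.neg_apply] at h0
      rcases hx (Sum.inl ⟨0, hm1⟩) with h | h <;> rw [h] at h0 <;> norm_num at h0
    have hNotBoth : ¬ (x ∈ (⋃ i, ⋃ j, ⋃ k ∈ Finset.Icc 1 (2 ^ n),
          Set.range fun r => doubledBlock (A i) (A j) k r) ∧
        -x ∈ (⋃ i, ⋃ j, ⋃ k ∈ Finset.Icc 1 (2 ^ n),
          Set.range fun r => doubledBlock (A i) (A j) k r)) := by
      rintro ⟨h1, h2⟩
      simp only [Set.mem_iUnion, Set.mem_range, Finset.mem_Icc] at h1 h2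
      obtain ⟨i, j, k, ⟨hk1, hk2⟩, r, hr⟩ := h1
      obtain ⟨i', j', k', ⟨hk1', hk2'⟩, r', hr'⟩ := h2
      have heq : doubledBlock (A i) (A j) k r = -(doubledBlock (A i') (A j') k' r') := by
        rw [hr, hr', neg_neg]
      by_cases hcase : (i, j, k, r) = (i', j', k', r')
      · simp only [Prod.mk.injEq] at hcase
        obtain ⟨hi, hj, hk, hrr⟩ := hcase
        subst hi; subst hj; subst hk; subst hrr
        rw [hr] at heq
        exact hxx heq
      · exact (part3 i j k hk1 hk2 i' j' k' hk1' hk2' r r' hcase).2 heq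
    rcases hOr with h | h
    · exact Or.inl ⟨h, fun h' => hNotBoth ⟨h, h'⟩⟩
    · exact Or.inr ⟨h, fun h' => hNotBoth ⟨h', h⟩⟩
end
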